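/- On the combinatorial Fock space of the species L of linear orderings with weight ω_L(f,g) = δ_{f, g|_U} (g restricted to U equals f), the operators satisfy a(h₁)a*(h₂) = ⟨h₁,h₂⟩·1; i.e. one obtains the free (full Fock space) relations. -/

import Mathlib

open scoped BigOperators

noncomputable section

/-- Vectors of the (unsymmetrized) combinatorial Fock space of a species with level sets
`F n`, over a one-particle space with orthonormal basis indexed by `J`: a level-`n`
component assigns to each structure `f ∈ F[n]` a tensor `K^{⊗n}`, represented by its
coefficients on basis tensors, i.e. a function of colorings `c : Fin n → J`. -/
def CVec (F : ℕ → Type) (J : Type) : Type := ∀ n, F n → (Fin n → J) → ℂ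

/-- Membership in the symmetric Hilbert space `Γ_F(K)`: `φ(F[σ] f) = U(σ) φ(f)`. -/
def IsSymmVec {F : ℕ → Type} {J : Type}
    (ρ : ∀ n, Equiv.Perm (Fin n) → F n → F n) (φ : CVec F J) : Prop :=
  ∀ (n : ℕ) (σ : Equiv.Perm (Fin n)) (f : F n) (c : Fin n → J),
    φ n (ρ n σ f) c = φ n f (c ∘ ⇑σ)

/-- The annihilation operator `a(e_j)` of the combinatorial Fock space with weight `ω`:
`(a(h)φ)(f) = Σ_{g ∈ F[n+1]} ω(f,g) · inp_n(h, φ(g))`. -/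
def ann {F : ℕ → Type} [∀ n, Fintype (F n)] {J : Type}
    (ω : ∀ n, F n → F (n + 1) → ℂ) (j : J) (φ : CVec F J) : CVec F J :=
  fun n f c => ∑ g : F (n + 1), ω n f g * φ (n + 1) g (Fin.snoc c j)

/-- The symmetrized creation operator `a*(e_j)` of the combinatorial Fock space with weight
`ω`: `(a*(h)φ)(f) = Σ_{k=0}^{n} Σ_g conj ω(g, F[τ_{n,k}] f) · U(τ_{n,k})(φ(g) ⊗ h)` for
`f ∈ F[n+1]`, where `τ_{n,k}` is the transposition of `n` and `k`. -/
def cre {F : ℕ → Type} [∀ n, Fintype (F n)] {J : Type} [DecidableEq J]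
    (ρ : ∀ n, Equiv.Perm (Fin n) → F n → F n)
    (ω : ∀ n, F n → F (n + 1) → ℂ) (j : J) (φ : CVec F J) : CVec F J
  | 0 => fun _ _ => 0
  | (m + 1) => fun f c =>
      ∑ k : Fin (m + 1), ∑ g : F m,
        (starRingEnd ℂ) (ω m g (ρ (m + 1) (Equiv.swap (Fin.last m) k) f)) *
          (if c k = j then
            φ m g (fun i => c (Equiv.swap (Fin.last m) k i.castSucc)) else 0)

end

noncomputable section

/-- Level `n` of the species `L` of linear orderings: bijections `{0,…,n-1} ≃ {0,…,n-1}`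
(orderings of the set `n`). -/
abbrev LOrd (n : ℕ) : Type := Fin n ≃ Fin n

/-- Transport of linear orderings: `L[σ](f) = σ ∘ f`. -/
def rhoL : ∀ n, Equiv.Perm (Fin n) → LOrd n → LOrd n := fun _ σ f => f.trans σ

/-- The weight of the species of linear orderings: `ω_L(f,g) = δ_{f, g|U}`, i.e. `1` iff
the ordering `g` of `{0,…,n}` extends the ordering `f` of `{0,…,n-1}` (so `g` places the
new point `*` last). -/
def omegaL : ∀ n, LOrd n → LOrd (n + 1) → ℂ := fun n f g =>
  if ∀ i : Fin n, g i.castSucc = Fin.castSucc (f i) then 1 else 0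

/-- On the combinatorial Fock space of the species `L` of linear orderings
with weight `ω_L(f,g) = δ_{f, g|U}` (i.e. the full Fock space `Γ_L(K)`), the operators
satisfy `a(h₁)a*(h₂) = ⟨h₁,h₂⟩·1`: the free (full Fock space) relations (stated on basis
vectors `h₁ = e_{j₁}`, `h₂ = e_{j₂}`, so `⟨h₁,h₂⟩ = δ_{j₁ j₂}`). -/
theorem free_relations_linear_orders {J : Type} [DecidableEq J]
    (φ : CVec LOrd J) (hφ : IsSymmVec rhoL φ) (j₁ j₂ : J)
    (n : ℕ) (f : LOrd n) (c : Fin n → J) :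
    ann omegaL j₁ (cre rhoL omegaL j₂ φ) n f c
      = (if j₁ = j₂ then (1 : ℂ) else 0) * φ n f c := by
  classical
  set g₀ : LOrd (n+1) := finSuccEquivLast.trans ((f.optionCongr).trans finSuccEquivLast.symm)
    with hg₀
  have hcast : ∀ i : Fin n, g₀ i.castSucc = (f i).castSucc := by
    intro i
    simp [hg₀, finSuccEquivLast_castSucc, finSuccEquivLast_symm_some]
  have hlast : g₀ (Fin.last n) = Fin.last n := by
    simp [hg₀, finSuccEquivLast_last]
  show (∑ g : LOrd (n+1), omegaL n f g * cre rhoL omegaL j₂ φ (n+1) g (Fin.snoc c j₁)) = _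
  rw [Finset.sum_eq_single g₀]
  · -- main term
    have hω : omegaL n f g₀ = 1 := by
      simp only [omegaL]
      rw [if_pos]
      intro i; exact hcast i
    rw [hω, one_mul]
    show (∑ k : Fin (n+1), ∑ h : LOrd n,
        (starRingEnd ℂ) (omegaL n h (rhoL (n+1) (Equiv.swap (Fin.last n) k) g₀)) *
          (if (Fin.snoc c j₁ : Fin (n+1) → J) k = j₂ then
            φ n h (fun i => (Fin.snoc c j₁ : Fin (n+1) → J)
              (Equiv.swap (Fin.last n) k i.castSucc)) else 0)) = _
    rw [Finset.sum_eq_single (Fin.last n)]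
    · -- k = last
      rw [Finset.sum_eq_single f]
      · have hρ : rhoL (n+1) (Equiv.swap (Fin.last n) (Fin.last n)) g₀ = g₀ := by
          rw [Equiv.swap_self]; rfl
        rw [hρ]
        have hω2 : omegaL n f g₀ = 1 := hω
        rw [hω2, map_one, one_mul]
        have h1 : (Fin.snoc c j₁ : Fin (n+1) → J) (Fin.last n) = j₁ := Fin.snoc_last _ _
        rw [h1]
        have h2 : (fun i : Fin n => (Fin.snoc c j₁ : Fin (n+1) → J)
            (Equiv.swap (Fin.last n) (Fin.last n) i.castSucc)) = c := by
          funext i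
          rw [Equiv.swap_self]
          exact Fin.snoc_castSucc _ _ _
        rw [h2]
        split <;> simp
      · intro h _ hne
        have hρ : rhoL (n+1) (Equiv.swap (Fin.last n) (Fin.last n)) g₀ = g₀ := by
          rw [Equiv.swap_self]; rfl
        rw [hρ]
        have : omegaL n h g₀ = 0 := by
          simp only [omegaL]
          rw [if_neg]
          intro hc
          apply hne
          apply Equiv.ext
          intro i
          have := hc i
          rw [hcast i] at this
          exact Fin.castSucc_injective n this.symm
        rw [this, map_zero, zero_mul]
      · intro h; exact absurd (Finset.mem_univ f) h
    · intro k _ hk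
      obtain ⟨k', rfl⟩ : ∃ k' : Fin n, k = k'.castSucc := by
        rcases Fin.eq_castSucc_or_eq_last k with ⟨k', hk'⟩ | h
        · exact ⟨k', hk'⟩
        · exact absurd h hk
      apply Finset.sum_eq_zero
      intro h _
      have : omegaL n h (rhoL (n+1) (Equiv.swap (Fin.last n) k'.castSucc) g₀) = 0 := by
        simp only [omegaL, rhoL]
        refine if_neg ?_
        intro hc
        have := hc (f.symm k')
        simp only [Equiv.trans_apply] at this
        rw [hcast (f.symm k'), Equiv.apply_symm_apply] at this
        rw [Equiv.swap_apply_right] at this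
        exact (Fin.castSucc_lt_last _).ne' this
      rw [this, map_zero, zero_mul]
    · intro h; exact absurd (Finset.mem_univ _) h
  · -- g ≠ g₀ : omegaL n f g = 0
    intro g _ hne
    have : omegaL n f g = 0 := by
      simp only [omegaL]
      rw [if_neg]
      intro hc
      apply hne
      apply Equiv.ext
      intro i
      refine Fin.lastCases ?_ ?_ i
      · rw [hlast]
        by_contra hne2
        obtain ⟨m, hm⟩ : ∃ m : Fin n, g (Fin.last n) = m.castSucc := by
          rcases Fin.eq_castSucc_or_eq_last (g (Fin.last n)) with ⟨m, hm⟩ | h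
          · exact ⟨m, hm⟩
          · exact absurd h hne2
        have := hc (f.symm m)
        rw [Equiv.apply_symm_apply] at this
        rw [← hm] at this
        have := g.injective this
        exact (Fin.castSucc_lt_last _).ne this
      · intro i
        rw [hc i, hcast i]
    rw [this, zero_mul]
  · intro h; exact absurd (Finset.mem_univ _) h

end
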